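/- Let X be a finite set with discrete topology and d : (ℕ → X) → Y a non-constant stopping rule with stopping-time function k_d. For each j ∈ ℕ, the set A_j := { S : ℕ → X | k_d(S) ≥ j } is closed (hence compact) in the product topology on ℕ → X. -/

import Mathlib

def concat {X : Type*} (S : ℕ → X) (k : ℕ) (T : ℕ → X) : ℕ → X :=
  fun i => if i < k then S i else T (i - k)

lemma concat_self {X : Type*} (S : ℕ → X) (k : ℕ) :
    concat S k (fun i => S (i + k)) = S := by
  funext i
  simp only [concat]
  split
  · rfl
  · congr 1; omega

lemma kd_mono {X Y : Type*} (d : (ℕ → X) → Y) (kd : (ℕ → X) → ℕ)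
    (hkd : ∀ S : ℕ → X, (∀ T : ℕ → X, d (concat S (kd S) T) = d S) ∧
      ∀ k < kd S, ∃ T : ℕ → X, d (concat S k T) ≠ d S)
    (S S' : ℕ → X) (h : ∀ i < kd S, S' i = S i) : kd S' ≤ kd S := by
  have hconcat : ∀ T, concat S' (kd S) T = concat S (kd S) T := by
    intro T; funext i
    simp only [concat]
    split
    · exact h i (by assumption)
    · rfl
  have hdS' : d S' = d S := by
    have := (hkd S).1 (fun i => S' (i + kd S))
    rw [← hconcat, concat_self] at this
    exact this
  by_contra hlt
  push_neg at hlt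
  obtain ⟨T, hT⟩ := (hkd S').2 (kd S) hlt
  rw [hconcat, (hkd S).1, ← hdS'] at hT
  exact hT rfl

/-- For a non-constant stopping rule `d` with stopping-time function `k_d`,
each set `A_j = {S | k_d S ≥ j}` is closed, hence compact, in the product topology. -/
theorem stoppingTime_superlevel_closed_compact {X Y : Type*} [Finite X]
    [TopologicalSpace X] [DiscreteTopology X]
    (d : (ℕ → X) → Y)
    (hnc : ∃ S S' : ℕ → X, d S ≠ d S')
    (kd : (ℕ → X) → ℕ)
    (hkd : ∀ S : ℕ → X, (∀ T : ℕ → X, d (concat S (kd S) T) = d S) ∧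
      ∀ k < kd S, ∃ T : ℕ → X, d (concat S k T) ≠ d S)
    (j : ℕ) :
    IsClosed {S : ℕ → X | j ≤ kd S} ∧ IsCompact {S : ℕ → X | j ≤ kd S} := by
  have hclosed : IsClosed {S : ℕ → X | j ≤ kd S} := by
    rw [← isOpen_compl_iff]
    rw [isOpen_iff_mem_nhds]
    intro S hS
    simp only [Set.mem_compl_iff, Set.mem_setOf_eq, not_le] at hS
    have hopen : ∀ i : ℕ, IsOpen {S' : ℕ → X | S' i = S i} := by
      intro i
      exact IsOpen.preimage (continuous_apply (A := fun _ : ℕ => X) i) (isOpen_discrete ({S i} : Set X))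
    have hV : IsOpen (⋂ i ∈ Finset.range (kd S), {S' : ℕ → X | S' i = S i}) :=
      isOpen_biInter_finset (fun i _ => hopen i)
    refine Filter.mem_of_superset (hV.mem_nhds ?_) ?_
    · simp
    · intro S' hS'
      simp only [Set.mem_iInter, Finset.mem_range, Set.mem_setOf_eq] at hS'
      simp only [Set.mem_compl_iff, Set.mem_setOf_eq, not_le]
      exact lt_of_le_of_lt (kd_mono d kd hkd S S' hS') hS
  exact ⟨hclosed, hclosed.isCompact⟩
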